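/- Let π be a group and n a natural number. Let r, s be n × n matrices over Λ = MonoidAlgebra (ZMod 2) π with s * r = 1. Then for any indices i ≠ j in Fin n and any u ∈ π, the element Σ_p r p i * ⟨u•(s j p), u•(s j p)⟩ of Λ lies in T; equivalently, its image in the conjugation-coinvariants Λ/T is zero. -/

import Mathlib

/-- The coefficientwise "intersection pairing" `⟨x,y⟩ g = (x g)·(y g)` on the group
algebra `Λ = MonoidAlgebra (ZMod 2) π`. -/
noncomputable def interPairing {π : Type*} (x y : MonoidAlgebra (ZMod 2) π) :
    MonoidAlgebra (ZMod 2) π :=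
  MonoidAlgebra.ofCoeff (Finsupp.zipWith (· * ·) (by simp) x.coeff y.coeff)

/-- The `ZMod 2`-submodule `T ⊆ Λ` spanned by the elements
`single (g*h) 1 − single (h*g) 1`, so that `Λ/T` is the module of coinvariants of
the conjugation action of `π` on `Λ`. -/
noncomputable def conjSub (π : Type*) [Group π] :
    Submodule (ZMod 2) (MonoidAlgebra (ZMod 2) π) :=
  Submodule.span (ZMod 2)
    {z | ∃ g h : π, z = MonoidAlgebra.single (g * h) 1 - MonoidAlgebra.single (h * g) 1}

lemma interPairing_self {π : Type*} (x : MonoidAlgebra (ZMod 2) π) :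
    interPairing x x = x := by
  ext g
  have h2 : ∀ a : ZMod 2, a * a = a := by decide
  simp [interPairing, Finsupp.zipWith_apply, h2]

lemma commutator_mem_conjSub {π : Type*} [Group π] (a b : MonoidAlgebra (ZMod 2) π) :
    a * b - b * a ∈ conjSub π := by
  induction a using MonoidAlgebra.induction_on with
  | add x y hx hy =>
      have : (x + y) * b - b * (x + y) = (x * b - b * x) + (y * b - b * y) := by
        noncomm_ring
      rw [this]; exact Submodule.add_mem _ hx hy
  | smul c x hx =>
      have : (c • x) * b - b * (c • x) = c • (x * b - b * x) := by
        rw [smul_mul_assoc, mul_smul_comm, smul_sub]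
      rw [this]; exact Submodule.smul_mem _ _ hx
  | of g =>
      induction b using MonoidAlgebra.induction_on with
      | add x y hx hy =>
          have : (MonoidAlgebra.of (ZMod 2) π g) * (x + y)
              - (x + y) * (MonoidAlgebra.of (ZMod 2) π g)
              = ((MonoidAlgebra.of (ZMod 2) π g) * x - x * (MonoidAlgebra.of (ZMod 2) π g))
                + ((MonoidAlgebra.of (ZMod 2) π g) * y - y * (MonoidAlgebra.of (ZMod 2) π g)) := by
            noncomm_ring
          rw [this]; exact Submodule.add_mem _ hx hy
      | smul c x hx =>
          have : (MonoidAlgebra.of (ZMod 2) π g) * (c • x)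
              - (c • x) * (MonoidAlgebra.of (ZMod 2) π g)
              = c • ((MonoidAlgebra.of (ZMod 2) π g) * x
                - x * (MonoidAlgebra.of (ZMod 2) π g)) := by
            rw [smul_mul_assoc, mul_smul_comm, smul_sub]
          rw [this]; exact Submodule.smul_mem _ _ hx
      | of h =>
          refine Submodule.subset_span ⟨g, h, ?_⟩
          simp [MonoidAlgebra.of_apply, MonoidAlgebra.single_mul_single]

/-- If `s * r = 1` then for `i ≠ j` and `u ∈ π`, the element
`Σ_p r p i * ⟨u•(s j p), u•(s j p)⟩` lies in `T`, i.e. vanishes in the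
conjugation-coinvariants `Λ/T`. -/
theorem diag_pairing_mem_conjSub (π : Type*) [Group π] (n : ℕ)
    (r s : Matrix (Fin n) (Fin n) (MonoidAlgebra (ZMod 2) π))
    (hsr : s * r = 1) (i j : Fin n) (hij : i ≠ j) (u : π) :
    (∑ p : Fin n, r p i *
      interPairing (MonoidAlgebra.single u 1 * s j p) (MonoidAlgebra.single u 1 * s j p))
      ∈ conjSub π := by
  simp only [interPairing_self]
  have hzero : ∑ p : Fin n, (MonoidAlgebra.single u 1 * s j p) * r p i = 0 := by
    calc ∑ p : Fin n, (MonoidAlgebra.single u 1 * s j p) * r p i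
        = MonoidAlgebra.single u 1 * ∑ p : Fin n, s j p * r p i := by
          rw [Finset.mul_sum]; simp [mul_assoc]
      _ = MonoidAlgebra.single u 1 * (s * r) j i := by rw [Matrix.mul_apply]
      _ = 0 := by rw [hsr, Matrix.one_apply_ne (Ne.symm hij), mul_zero]
  have key : (∑ p : Fin n, r p i * (MonoidAlgebra.single u 1 * s j p))
      = (∑ p : Fin n, (r p i * (MonoidAlgebra.single u 1 * s j p)
          - (MonoidAlgebra.single u 1 * s j p) * r p i))
        + ∑ p : Fin n, (MonoidAlgebra.single u 1 * s j p) * r p i := by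
    rw [← Finset.sum_add_distrib]
    exact Finset.sum_congr rfl fun p _ => (sub_add_cancel _ _).symm
  rw [key, hzero, add_zero]
  exact Submodule.sum_mem _ fun p _ => commutator_mem_conjSub _ _
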